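/- arXiv:0812.4893 — 3 statements merged into one kernel-verified Lean document; each statement's English description precedes it below -/
import Mathlib

section
/- Let w : E → ℝ_{>0} be weights on the edges of a bipartite graph G = (R ∪ B, E). Let M be a matching and f : R → ℝ_{≥0} a potential function such that for every edge {r,b} ∈ E: either w({r,b}) ≤ f(r), or w({r,b}) ≤ w(e) for some edge e ∈ M incident to r, or w({r,b}) ≤ w(e) for some edge e ∈ M incident to b. Then for any matching M* in G, w(M*) ≤ ∑_{r∈R} f(r) + 2·w(M). -/
/-- A set of red–blue pairs is a matching: no two of its edges share an endpoint. -/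
def IsMatching {R B : Type*} (M : Finset (R × B)) : Prop :=
  ∀ e ∈ M, ∀ f ∈ M, (e.1 = f.1 ∨ e.2 = f.2) → e = f

/-- in a bipartite graph with edge set `E` and positive weights `w`,
if `M` is a matching and `f : R → ℝ≥0` a potential such that every edge `(r,b)` is
dominated either by `f r`, or by the weight of an `M`-edge at `r`, or by the
weight of an `M`-edge at `b`, then every matching `M*` satisfies
`w(M*) ≤ ∑_r f r + 2·w(M)`. -/
theorem stmt13 {R B : Type*} [Fintype R] [Fintype B] (E : Finset (R × B))
    (w : R × B → ℝ) (hw : ∀ e ∈ E, 0 < w e)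
    (M : Finset (R × B)) (hME : M ⊆ E) (hM : IsMatching M)
    (f : R → ℝ) (hf : ∀ r, 0 ≤ f r)
    (hdom : ∀ e ∈ E, w e ≤ f e.1 ∨
      (∃ e' ∈ M, e'.1 = e.1 ∧ w e ≤ w e') ∨ (∃ e' ∈ M, e'.2 = e.2 ∧ w e ≤ w e'))
    (Mstar : Finset (R × B)) (hMstarE : Mstar ⊆ E) (hMstar : IsMatching Mstar) :
    ∑ e ∈ Mstar, w e ≤ (∑ r, f r) + 2 * ∑ e ∈ M, w e := by
  classical
  set S1 := Mstar.filter (fun e => w e ≤ f e.1) with hS1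
  set S2 := (Mstar \ S1).filter (fun e => ∃ e' ∈ M, e'.1 = e.1 ∧ w e ≤ w e') with hS2
  set S3 := (Mstar \ S1) \ S2 with hS3
  have hMnn : ∀ e ∈ M, 0 ≤ w e := fun e he => (hw e (hME he)).le
  have hsplit1 : ∑ e ∈ Mstar, w e = ∑ e ∈ S1, w e + ∑ e ∈ Mstar \ S1, w e := by
    rw [← Finset.sum_sdiff (Finset.filter_subset (fun e => w e ≤ f e.1) Mstar)]
    ring
  have hsplit2 : ∑ e ∈ Mstar \ S1, w e = ∑ e ∈ S2, w e + ∑ e ∈ S3, w e := by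
    rw [hS3, ← Finset.sum_sdiff (Finset.filter_subset (fun e => ∃ e' ∈ M, e'.1 = e.1 ∧ w e ≤ w e') (Mstar \ S1))]
    ring
  -- bound on S1
  have hb1 : ∑ e ∈ S1, w e ≤ ∑ r, f r := by
    have h1 : ∑ e ∈ S1, w e ≤ ∑ e ∈ S1, f e.1 :=
      Finset.sum_le_sum (fun e he => (Finset.mem_filter.mp he).2)
    have hinj : Set.InjOn (Prod.fst : R × B → R) ↑S1 := by
      intro a ha b hb hab
      exact hMstar a (Finset.mem_filter.mp ha).1 b (Finset.mem_filter.mp hb).1 (Or.inl hab)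
    have h2 : ∑ e ∈ S1, f e.1 = ∑ r ∈ S1.image Prod.fst, f r :=
      (Finset.sum_image (fun a ha b hb h => hinj ha hb h)).symm
    have h3 : ∑ r ∈ S1.image Prod.fst, f r ≤ ∑ r, f r :=
      Finset.sum_le_sum_of_subset_of_nonneg (Finset.subset_univ _)
        (fun r _ _ => hf r)
    linarith
  -- generic bound for S2 and S3
  have hb2 : ∑ e ∈ S2, w e ≤ ∑ e ∈ M, w e := by
    set g : R × B → R × B := fun e =>
      if h : ∃ e' ∈ M, e'.1 = e.1 ∧ w e ≤ w e' then h.choose else e with hg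
    have hgspec : ∀ e ∈ S2, g e ∈ M ∧ (g e).1 = e.1 ∧ w e ≤ w (g e) := by
      intro e he
      have h := (Finset.mem_filter.mp he).2
      simp only [hg, dif_pos h]
      exact h.choose_spec
    have hinj : Set.InjOn g ↑S2 := by
      intro a ha b hb hab
      obtain ⟨haM, ha1, _⟩ := hgspec a ha
      obtain ⟨hbM, hb1, _⟩ := hgspec b hb
      have : a.1 = b.1 := by rw [← ha1, ← hb1, hab]
      have haMs : a ∈ Mstar := (Finset.mem_sdiff.mp (Finset.mem_filter.mp ha).1).1
      have hbMs : b ∈ Mstar := (Finset.mem_sdiff.mp (Finset.mem_filter.mp hb).1).1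
      exact hMstar a haMs b hbMs (Or.inl this)
    calc ∑ e ∈ S2, w e ≤ ∑ e ∈ S2, w (g e) :=
          Finset.sum_le_sum (fun e he => (hgspec e he).2.2)
      _ = ∑ e ∈ S2.image g, w e :=
          (Finset.sum_image (fun a ha b hb h => hinj ha hb h)).symm
      _ ≤ ∑ e ∈ M, w e := by
          apply Finset.sum_le_sum_of_subset_of_nonneg
          · intro e he
            obtain ⟨a, ha, rfl⟩ := Finset.mem_image.mp he
            exact (hgspec a ha).1
          · exact fun e he _ => hMnn e he
  have hb3 : ∑ e ∈ S3, w e ≤ ∑ e ∈ M, w e := by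
    set g : R × B → R × B := fun e =>
      if h : ∃ e' ∈ M, e'.2 = e.2 ∧ w e ≤ w e' then h.choose else e with hg
    have hS3dom : ∀ e ∈ S3, ∃ e' ∈ M, e'.2 = e.2 ∧ w e ≤ w e' := by
      intro e he
      rw [hS3] at he
      obtain ⟨he1, he2⟩ := Finset.mem_sdiff.mp he
      obtain ⟨heMs, heS1⟩ := Finset.mem_sdiff.mp he1
      have heE : e ∈ E := hMstarE heMs
      rcases hdom e heE with h | h | h
      · exact absurd (Finset.mem_filter.mpr ⟨heMs, h⟩) heS1
      · exact absurd (Finset.mem_filter.mpr ⟨he1, h⟩) he2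
      · exact h
    have hgspec : ∀ e ∈ S3, g e ∈ M ∧ (g e).2 = e.2 ∧ w e ≤ w (g e) := by
      intro e he
      have h := hS3dom e he
      simp only [hg, dif_pos h]
      exact h.choose_spec
    have hinj : Set.InjOn g ↑S3 := by
      intro a ha b hb hab
      obtain ⟨haM, ha1, _⟩ := hgspec a ha
      obtain ⟨hbM, hb1, _⟩ := hgspec b hb
      have : a.2 = b.2 := by rw [← ha1, ← hb1, hab]
      have haMs : a ∈ Mstar := (Finset.mem_sdiff.mp (Finset.mem_sdiff.mp ha).1).1
      have hbMs : b ∈ Mstar := (Finset.mem_sdiff.mp (Finset.mem_sdiff.mp hb).1).1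
      exact hMstar a haMs b hbMs (Or.inr this)
    calc ∑ e ∈ S3, w e ≤ ∑ e ∈ S3, w (g e) :=
          Finset.sum_le_sum (fun e he => (hgspec e he).2.2)
      _ = ∑ e ∈ S3.image g, w e :=
          (Finset.sum_image (fun a ha b hb h => hinj ha hb h)).symm
      _ ≤ ∑ e ∈ M, w e := by
          apply Finset.sum_le_sum_of_subset_of_nonneg
          · intro e he
            obtain ⟨a, ha, rfl⟩ := Finset.mem_image.mp he
            exact (hgspec a ha).1
          · exact fun e he _ => hMnn e he
  linarith
end

section
/- Let w : E → ℝ_{>0} and suppose a matching M, a set L ⊆ E of 'lost' edges, and for each b ∈ B a value w_B(b) equal to the weight of the M-edge at b (or 0 if b unmatched) satisfy: every lost edge {r,b} ∈ L has w({r,b}) < w_B(b), and each blue node is incident to at most Δ−1 lost edges. Then w(L) ≤ (Δ−1)·∑_{b∈B} w_B(b). -/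
/-- Lemma lost-ub: if every lost edge `(r,b) ∈ L` is strictly
lighter than the weight `wB b` of the blue endpoint's matching edge, `wB ≥ 0`,
and each blue node is incident to at most `Δ−1` lost edges, then
`w(L) ≤ (Δ−1)·∑_b wB b`. -/
theorem stmt15 {R B : Type*} [Fintype R] [Fintype B] [DecidableEq B]
    (E : Finset (R × B)) (w : R × B → ℝ) (hw : ∀ e ∈ E, 0 < w e)
    (Δ : ℕ) (hΔ : 1 ≤ Δ) (L : Finset (R × B)) (hLE : L ⊆ E)
    (wB : B → ℝ) (hwB0 : ∀ b, 0 ≤ wB b)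
    (hlight : ∀ e ∈ L, w e < wB e.2)
    (hcount : ∀ b : B, (L.filter (fun e => e.2 = b)).card ≤ Δ - 1) :
    ∑ e ∈ L, w e ≤ ((Δ : ℝ) - 1) * ∑ b, wB b := by
  have key : ∑ e ∈ L, w e = ∑ b : B, ∑ e ∈ L.filter (fun e => e.2 = b), w e := by
    rw [← Finset.sum_fiberwise L (fun e => e.2) w]
  rw [key, Finset.mul_sum]
  refine Finset.sum_le_sum fun b _ => ?_
  calc ∑ e ∈ L.filter (fun e => e.2 = b), w e
      ≤ ∑ _e ∈ L.filter (fun e => e.2 = b), wB b := by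
        refine Finset.sum_le_sum fun e he => ?_
        have hmem := Finset.mem_filter.mp he
        have := hlight e hmem.1
        rw [hmem.2] at this
        exact this.le
    _ = (L.filter (fun e => e.2 = b)).card * wB b := by
        rw [Finset.sum_const, nsmul_eq_mul]
    _ ≤ ((Δ : ℝ) - 1) * wB b := by
        refine mul_le_mul_of_nonneg_right ?_ (hwB0 b)
        have h := hcount b
        have : ((L.filter (fun e => e.2 = b)).card : ℝ) ≤ ((Δ - 1 : ℕ) : ℝ) := by
          exact_mod_cast h
        calc ((L.filter (fun e => e.2 = b)).card : ℝ) ≤ ((Δ - 1 : ℕ) : ℝ) := this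
          _ = (Δ : ℝ) - 1 := by
              rw [Nat.cast_sub hΔ, Nat.cast_one]
end

section
/- In a bipartite graph with strict preferences induced by distinct positive edge weights (each node prefers heavier incident edges), the greedy matching (obtained by adding edges in order of decreasing weight when both endpoints are still free) is the unique stable matching. -/
/-- One pass of the greedy algorithm: process the remaining edges in order,
adding an edge to the accumulator `acc` whenever both of its endpoints are
still free. -/
def greedyAux {R B : Type*} [DecidableEq R] [DecidableEq B]
    (acc : List (R × B)) : List (R × B) → List (R × B)
  | [] => acc
  | e :: rest =>
      if acc.any (fun f => f.1 = e.1 || f.2 = e.2) then greedyAux acc rest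
      else greedyAux (e :: acc) rest

/-- The greedy matching of an edge list (to be applied to the edges sorted in
decreasing order of weight). -/
def greedy {R B : Type*} [DecidableEq R] [DecidableEq B]
    (l : List (R × B)) : List (R × B) :=
  greedyAux [] l

section Aux

variable {R B : Type*} [DecidableEq R] [DecidableEq B]

lemma greedyAux_sub (l : List (R × B)) : ∀ acc, ∀ e ∈ greedyAux acc l, e ∈ acc ∨ e ∈ l := by
  induction l with
  | nil => intro acc e he; rw [greedyAux] at he; exact Or.inl he
  | cons x rest ih =>
    intro acc e he
    rw [greedyAux] at he
    split at he
    · rcases ih acc e he with h | h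
      · exact Or.inl h
      · exact Or.inr (List.mem_cons_of_mem _ h)
    · rcases ih (x :: acc) e he with h | h
      · rcases List.mem_cons.mp h with h | h
        · exact Or.inr (h ▸ List.mem_cons_self)
        · exact Or.inl h
      · exact Or.inr (List.mem_cons_of_mem _ h)

lemma acc_sub_greedyAux (l : List (R × B)) : ∀ acc, ∀ e ∈ acc, e ∈ greedyAux acc l := by
  induction l with
  | nil => intro acc e he; rw [greedyAux]; exact he
  | cons x rest ih =>
    intro acc e he
    rw [greedyAux]
    split
    · exact ih acc e he
    · exact ih (x :: acc) e (List.mem_cons_of_mem _ he)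

lemma greedyAux_matching (l : List (R × B)) :
    ∀ acc, (∀ e ∈ acc, ∀ f ∈ acc, (e.1 = f.1 ∨ e.2 = f.2) → e = f) →
    ∀ e ∈ greedyAux acc l, ∀ f ∈ greedyAux acc l, (e.1 = f.1 ∨ e.2 = f.2) → e = f := by
  induction l with
  | nil => intro acc hacc; rw [greedyAux]; exact hacc
  | cons x rest ih =>
    intro acc hacc
    rw [greedyAux]
    split
    · exact ih acc hacc
    · rename_i hany
      simp only [List.any_eq_true, Bool.or_eq_true, decide_eq_true_eq, not_exists, not_and,
        not_or] at hany
      apply ih (x :: acc)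
      intro e he f hf hef
      rcases List.mem_cons.mp he with rfl | he' <;> rcases List.mem_cons.mp hf with rfl | hf'
      · rfl
      · exact absurd (Or.symm (hef.imp Eq.symm Eq.symm)).symm
          (by rcases hany f hf' with ⟨h1, h2⟩; rcases hef with h | h
              · exact absurd h.symm h1
              · exact absurd h.symm h2)
      · rcases hany e he' with ⟨h1, h2⟩
        rcases hef with h | h
        · exact absurd h h1
        · exact absurd h h2
      · exact hacc e he' f hf' hef

lemma greedyAux_block (w : R × B → ℝ) (l : List (R × B)) :
    ∀ acc, l.Pairwise (fun a b => w b < w a) →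
    (∀ a ∈ acc, ∀ b ∈ l, w b < w a) →
    ∀ e ∈ l, e ∉ greedyAux acc l →
    ∃ f ∈ greedyAux acc l, (f.1 = e.1 ∨ f.2 = e.2) ∧ w e < w f := by
  induction l with
  | nil => intro acc _ _ e he; exact absurd he List.not_mem_nil
  | cons x rest ih =>
    intro acc hsort hw e he hne
    rw [greedyAux] at hne ⊢
    split at hne <;> rename_i hany
    · rcases List.mem_cons.mp he with rfl | he'
      · rw [if_pos hany]
        simp only [List.any_eq_true, Bool.or_eq_true, decide_eq_true_eq] at hany
        obtain ⟨f, hf, hconf⟩ := hany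
        exact ⟨f, acc_sub_greedyAux rest acc f hf, hconf,
          hw f hf e (List.mem_cons_self)⟩
      · rw [if_pos hany]
        exact ih acc hsort.of_cons
          (fun a ha b hb => hw a ha b (List.mem_cons_of_mem _ hb)) e he' hne
    · rcases List.mem_cons.mp he with rfl | he'
      · exact absurd (acc_sub_greedyAux rest (e :: acc) e (List.mem_cons_self)) hne
      · rw [if_neg hany]
        apply ih (x :: acc) hsort.of_cons _ e he' hne
        intro a ha b hb
        rcases List.mem_cons.mp ha with rfl | ha'
        · exact (List.pairwise_cons.mp hsort).1 b hb
        · exact hw a ha' b (List.mem_cons_of_mem _ hb)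

end Aux

/-- in a bipartite graph whose strict preferences are induced by
pairwise distinct positive edge weights (heavier = more preferred), the greedy
matching (edges added in decreasing weight order when both endpoints are free)
is the unique stable matching. -/
theorem stmt18 {R B : Type*} [Fintype R] [Fintype B] [DecidableEq R] [DecidableEq B]
    (E : Finset (R × B)) (w : R × B → ℝ)
    (hw : ∀ e ∈ E, 0 < w e)
    (hdist : ∀ e ∈ E, ∀ f ∈ E, w e = w f → e = f)
    (l : List (R × B)) (hnd : l.Nodup) (hmem : ∀ e, e ∈ l ↔ e ∈ E)
    (hsort : l.Pairwise (fun a b => w b < w a)) :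
    -- the greedy matching is stable:
    ((∀ e ∈ greedy l, e ∈ E) ∧
      (∀ e ∈ greedy l, ∀ f ∈ greedy l, (e.1 = f.1 ∨ e.2 = f.2) → e = f) ∧
      (∀ e ∈ E, e ∉ greedy l →
        ¬ ((∀ f ∈ greedy l, f.1 = e.1 → w f < w e) ∧
           (∀ f ∈ greedy l, f.2 = e.2 → w f < w e)))) ∧
    -- and it is the unique stable matching:
    ∀ M : Finset (R × B), (∀ e ∈ M, e ∈ E) →
      (∀ e ∈ M, ∀ f ∈ M, (e.1 = f.1 ∨ e.2 = f.2) → e = f) →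
      (∀ e ∈ E, e ∉ M →
        ¬ ((∀ f ∈ M, f.1 = e.1 → w f < w e) ∧ (∀ f ∈ M, f.2 = e.2 → w f < w e))) →
      ∀ e, e ∈ M ↔ e ∈ greedy l := by
  have hGsub : ∀ e ∈ greedy l, e ∈ E := by
    intro e he
    rcases greedyAux_sub l [] e he with h | h
    · exact absurd h List.not_mem_nil
    · exact (hmem e).mp h
  have hGmatch : ∀ e ∈ greedy l, ∀ f ∈ greedy l, (e.1 = f.1 ∨ e.2 = f.2) → e = f :=
    greedyAux_matching l [] (by intro e he; exact absurd he List.not_mem_nil)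
  have hGblock : ∀ e ∈ E, e ∉ greedy l →
      ∃ f ∈ greedy l, (f.1 = e.1 ∨ f.2 = e.2) ∧ w e < w f := by
    intro e heE heG
    exact greedyAux_block w l [] hsort
      (by intro a ha; exact absurd ha List.not_mem_nil) e ((hmem e).mpr heE) heG
  refine ⟨⟨hGsub, hGmatch, ?_⟩, ?_⟩
  · intro e heE heG ⟨h1, h2⟩
    obtain ⟨f, hfG, hconf, hlt⟩ := hGblock e heE heG
    rcases hconf with h | h
    · exact absurd (h1 f hfG h) (not_lt.mpr hlt.le)
    · exact absurd (h2 f hfG h) (not_lt.mpr hlt.le)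
  · intro M hMsub hMmatch hMstab
    -- strong induction on the number of strictly heavier edges
    have hcard : ∀ e ∈ E, ∀ f ∈ E, w e < w f →
        (E.filter (fun g => w f < w g)).card < (E.filter (fun g => w e < w g)).card := by
      intro e heE f hfE hef
      apply Finset.card_lt_card
      constructor
      · intro g hg
        rw [Finset.mem_filter] at hg ⊢
        exact ⟨hg.1, hef.trans hg.2⟩
      · intro hsub
        have : f ∈ E.filter (fun g => w e < w g) := Finset.mem_filter.mpr ⟨hfE, hef⟩
        have := Finset.mem_filter.mp (hsub this)
        exact lt_irrefl _ this.2
    have key : ∀ n : ℕ, ∀ e ∈ E, (E.filter (fun f => w e < w f)).card = n →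
        (e ∈ M ↔ e ∈ greedy l) := by
      intro n
      induction n using Nat.strong_induction_on with
      | _ n IH =>
        intro e heE hn
        constructor
        · intro heM
          by_contra heG
          obtain ⟨f, hfG, hconf, hlt⟩ := hGblock e heE heG
          have hfE := hGsub f hfG
          have hfM : f ∈ M := (IH _ (hn ▸ hcard e heE f hfE hlt) f hfE rfl).mpr hfG
          have := hMmatch e heM f hfM (hconf.imp Eq.symm Eq.symm)
          exact absurd (this ▸ hlt) (lt_irrefl _)
        · intro heG
          by_contra heM
          have := hMstab e heE heM
          rw [not_and_or] at this
          obtain ⟨f, hfM, hconf, hge⟩ : ∃ f ∈ M, (f.1 = e.1 ∨ f.2 = e.2) ∧ ¬ w f < w e := by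
            rcases this with h | h <;> push_neg at h
            · obtain ⟨f, hfM, h1, h2⟩ := h
              exact ⟨f, hfM, Or.inl h1, not_lt.mpr h2⟩
            · obtain ⟨f, hfM, h1, h2⟩ := h
              exact ⟨f, hfM, Or.inr h1, not_lt.mpr h2⟩
          have hfE := hMsub f hfM
          have hne : f ≠ e := fun h => heM (h ▸ hfM)
          have hlt : w e < w f := by
            rcases lt_or_eq_of_le (not_lt.mp hge) with h | h
            · exact h
            · exact absurd (hdist e heE f hfE h).symm hne
          have hfG : f ∈ greedy l := (IH _ (hn ▸ hcard e heE f hfE hlt) f hfE rfl).mp hfM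
          have := hGmatch e heG f hfG (hconf.imp Eq.symm Eq.symm)
          exact absurd (this ▸ hlt) (lt_irrefl _)
    intro e
    by_cases heE : e ∈ E
    · exact key _ e heE rfl
    · constructor
      · intro h; exact absurd (hMsub e h) heE
      · intro h; exact absurd (hGsub e h) heE
end
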